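/- Let P1 and P2 be propositional normal programs with no head atom of P2 occurring in P1, let M1 be an answer set of P1, and let M = M1 ∪ M2 be an answer set of P = P1 ∪ sat(clone(P2)). Then M' is an answer set of P2 ∪ fix_P(M) if and only if M' = M2 ∪ M2' where M2' is an answer set of P2 ∪ fix_{P1}(M1). -/

import Mathlib

open Classical

/-- A propositional normal rule: optional head (none = constraint),
positive body atoms and (default-)negated body atoms. -/
structure ARule (α : Type) where
  head : Option α
  pos : Set α
  neg : Set α

/-- A propositional normal logic program. -/
abbrev AProgram (α : Type) := Set (ARule α)

namespace ASP

variable {α : Type}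

def ARule.headSet (r : ARule α) : Set α := {a | r.head = some a}

def ARule.atoms (r : ARule α) : Set α := ARule.headSet r ∪ r.pos ∪ r.neg

def progAtoms (P : AProgram α) : Set α := ⋃ r ∈ P, ARule.atoms r

def heads (P : AProgram α) : Set α := {a | ∃ r ∈ P, r.head = some a}

/-- The body of a rule is true in interpretation `I`. -/
def bodyTrue (I : Set α) (r : ARule α) : Prop :=
  r.pos ⊆ I ∧ ∀ a ∈ r.neg, a ∉ I

/-- `I` satisfies rule `r`. -/
def satRule (I : Set α) (r : ARule α) : Prop :=
  bodyTrue I r → ∃ h, r.head = some h ∧ h ∈ I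

def isModel (I : Set α) (P : AProgram α) : Prop := ∀ r ∈ P, satRule I r

/-- Gelfond–Lifschitz reduct of `P` with respect to `I`. -/
def reduct (P : AProgram α) (I : Set α) : AProgram α :=
  {r' | ∃ r ∈ P, (∀ a ∈ r.neg, a ∉ I) ∧ r' = ⟨r.head, r.pos, ∅⟩}

/-- `I` is an answer set of `P`: a minimal model of the reduct `P^I`. -/
def isAnswerSet (P : AProgram α) (I : Set α) : Prop :=
  isModel I (reduct P I) ∧ ∀ J, J ⊂ I → ¬ isModel J (reduct P I)

/-- A program is coherent if it has an answer set. -/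
def coherent (P : AProgram α) : Prop := ∃ I, isAnswerSet P I

/-- `fix B M`: facts for atoms of `M` and constraints for atoms of `B \ M`. -/
def fixProg (B M : Set α) : AProgram α :=
  {r | (∃ a ∈ M, r = ⟨some a, ∅, ∅⟩) ∨ (∃ a ∈ B \ M, r = ⟨none, {a}, ∅⟩)}

/-- A ground weak constraint `:~ pos, not neg [weight@level]`. -/
structure WeakC (α : Type) where
  pos : Set α
  neg : Set α
  weight : ℤ
  level : ℤ

def WeakC.atoms (w : WeakC α) : Set α := w.pos ∪ w.neg

/-- The body of a weak constraint is true in `I` (the weak constraint is violated). -/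
def WeakC.violated (w : WeakC α) (I : Set α) : Prop :=
  w.pos ⊆ I ∧ ∀ a ∈ w.neg, a ∉ I

/-- Cost of interpretation `I` at level `l` for weak constraints `W`. -/
noncomputable def cost (W : Finset (WeakC α)) (I : Set α) (l : ℤ) : ℤ :=
  ∑ w ∈ W.filter (fun w => w.level = l ∧ WeakC.violated w I), w.weight

/-- `I` is dominated by `J` with respect to the weak constraints `W`. -/
def dominated (W : Finset (WeakC α)) (I J : Set α) : Prop :=
  ∃ l, cost W I l > cost W J l ∧ ∀ l' > l, cost W I l' = cost W J l'

/-- `M` is an optimal answer set of program `P` with weak constraints `W`. -/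
def optAS (P : AProgram α) (W : Finset (WeakC α)) (M : Set α) : Prop :=
  isAnswerSet P M ∧ ∀ M', isAnswerSet P M' → ¬ dominated W M M'

/-- `sat(P)`: add `not s` to each rule body, plus a choice on the fresh atom `s`
 (rules `s :- not n` and `n :- not s`). -/
def satProg (s n : α) (P : AProgram α) : AProgram α :=
  ((fun r : ARule α => ARule.mk r.head r.pos (insert s r.neg)) '' P) ∪
    {⟨some s, ∅, {n}⟩, ⟨some n, ∅, {s}⟩}

/-- Complement `¬P` of a program with constraints: each constraint `:- B` becomes
 `v :- B`, and the constraint `:- not v` is added. -/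
def complProg (v : α) (P : AProgram α) : AProgram α :=
  {r | r ∈ P ∧ r.head ≠ none} ∪
    {r' | ∃ r ∈ P, r.head = none ∧ r' = ⟨some v, r.pos, r.neg⟩} ∪
    {⟨none, ∅, {v}⟩}

/-- Rules of `relaxed(P,l)`: keep rules with heads, turn each constraint `:- B`
into `unsat :- B`. -/
def relaxedRules (u : α) (P : AProgram α) : AProgram α :=
  {r | r ∈ P ∧ r.head ≠ none} ∪
    {r' | ∃ r ∈ P, r.head = none ∧ r' = ⟨some u, r.pos, r.neg⟩}

/-- The weak constraint `:~ unsat [1@l]` of `relaxed(P,l)`. -/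
def relaxWeak (u : α) (l : ℤ) : WeakC α := ⟨{u}, ∅, 1, l⟩

/-- A stratification: positive dependencies do not increase the level,
negative dependencies strictly decrease it. -/
def IsStratification (P : AProgram α) (lv : α → ℕ) : Prop :=
  ∀ r ∈ P, ∀ h, r.head = some h →
    (∀ a ∈ r.pos, lv a ≤ lv h) ∧ (∀ a ∈ r.neg, lv a < lv h)

def Stratified (P : AProgram α) : Prop := ∃ lv, IsStratification P lv

/-- `M` (an answer set of a program with atom base `B`) satisfies the constraint
program `C` iff `C ∪ fix_B(M)` is coherent. -/
def satisfiesC (C : AProgram α) (B M : Set α) : Prop := coherent (C ∪ fixProg B M)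

end ASP

open ASP

/-- Renaming a rule by an atom substitution `ρ`. -/
def renameRule {α : Type} (ρ : α → α) (r : ARule α) : ARule α :=
  ⟨r.head.map ρ, ρ '' r.pos, ρ '' r.neg⟩

/-- Renaming a program by an atom substitution `ρ`. -/
def renameProg {α : Type} (ρ : α → α) (P : AProgram α) : AProgram α :=
  renameRule ρ '' P

/-- `clone(P)`: rename every head atom `p` of `P` (wherever it occurs in `P`)
to the fresh atom `cl p`; non-head atoms are left unchanged. -/
noncomputable def cloneProg {α : Type} (cl : α → α) (P : AProgram α) : AProgram α :=
  renameProg (fun a => if a ∈ heads P then cl a else a) P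

section Helpers

open ASP

variable {α : Type}

lemma atoms_subset' {P : AProgram α} {r : ARule α} (hr : r ∈ P) :
    ARule.atoms r ⊆ progAtoms P := fun _ ha => Set.mem_biUnion hr ha

lemma heads_subset_progAtoms' {P : AProgram α} : heads P ⊆ progAtoms P := by
  rintro a ⟨r, hr, hhd⟩
  exact atoms_subset' hr (Or.inl (Or.inl hhd))

lemma negEmpty (I : Set α) : ∀ a ∈ (∅ : Set α), a ∉ I :=
  fun a ha => absurd ha (Set.notMem_empty a)

lemma as_subset_heads {P : AProgram α} {I : Set α} (h : isAnswerSet P I) :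
    I ⊆ heads P := by
  intro a haI
  by_contra hah
  refine h.2 (I ∩ heads P)
    (Set.ssubset_iff_subset_ne.mpr ⟨Set.inter_subset_left, fun heq => hah (by
      rw [← heq] at haI; exact haI.2)⟩) ?_
  rintro r' ⟨r, hr, hneg, rfl⟩ hbody
  obtain ⟨hh, hhd, hhI⟩ := h.1 _ ⟨r, hr, hneg, rfl⟩
    ⟨hbody.1.trans Set.inter_subset_left, negEmpty I⟩
  exact ⟨hh, hhd, hhI, r, hr, hhd⟩

lemma reduct_union' (P Q : AProgram α) (I : Set α) :
    reduct (P ∪ Q) I = reduct P I ∪ reduct Q I := by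
  ext r'
  constructor
  · rintro ⟨r, hr | hr, hneg, rfl⟩
    · exact Or.inl ⟨r, hr, hneg, rfl⟩
    · exact Or.inr ⟨r, hr, hneg, rfl⟩
  · rintro (⟨r, hr, hneg, rfl⟩ | ⟨r, hr, hneg, rfl⟩)
    · exact ⟨r, Or.inl hr, hneg, rfl⟩
    · exact ⟨r, Or.inr hr, hneg, rfl⟩

lemma reduct_fix' (B M I : Set α) : reduct (fixProg B M) I = fixProg B M := by
  ext r'
  constructor
  · rintro ⟨r, hr, hneg, rfl⟩
    rcases hr with ⟨a, ha, rfl⟩ | ⟨a, ha, rfl⟩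
    · exact Or.inl ⟨a, ha, rfl⟩
    · exact Or.inr ⟨a, ha, rfl⟩
  · intro hr
    rcases hr with ⟨a, ha, rfl⟩ | ⟨a, ha, rfl⟩
    · exact ⟨_, Or.inl ⟨a, ha, rfl⟩, negEmpty I, rfl⟩
    · exact ⟨_, Or.inr ⟨a, ha, rfl⟩, negEmpty I, rfl⟩

lemma isModel_union' {I : Set α} {P Q : AProgram α} :
    isModel I (P ∪ Q) ↔ isModel I P ∧ isModel I Q :=
  ⟨fun h => ⟨fun r hr => h r (Or.inl hr), fun r hr => h r (Or.inr hr)⟩,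
   fun h r hr => hr.elim (h.1 r) (h.2 r)⟩

lemma model_fix_iff' {B M I : Set α} :
    isModel I (fixProg B M) ↔ M ⊆ I ∧ ∀ a ∈ B, a ∉ M → a ∉ I := by
  constructor
  · intro h
    refine ⟨fun a ha => ?_, fun a haB haM haI => ?_⟩
    · obtain ⟨hh, heq, hhI⟩ := h ⟨some a, ∅, ∅⟩ (Or.inl ⟨a, ha, rfl⟩)
        ⟨Set.empty_subset I, negEmpty I⟩
      obtain rfl : a = hh := Option.some.inj heq
      exact hhI
    · obtain ⟨hh, heq, -⟩ := h ⟨none, {a}, ∅⟩ (Or.inr ⟨a, ⟨haB, haM⟩, rfl⟩)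
        ⟨Set.singleton_subset_iff.mpr haI, negEmpty I⟩
      exact absurd heq.symm (Option.some_ne_none hh)
  · rintro ⟨h1, h2⟩ r hr hbody
    rcases hr with ⟨a, ha, rfl⟩ | ⟨a, ha, rfl⟩
    · exact ⟨a, rfl, h1 ha⟩
    · exact absurd (hbody.1 rfl) (h2 a ha.1 ha.2)

lemma heads_fix_subset' {B M : Set α} : heads (fixProg B M) ⊆ M := by
  rintro a ⟨r, hr, hhd⟩
  rcases hr with ⟨b, hb, rfl⟩ | ⟨b, hb, rfl⟩
  · obtain rfl : b = a := Option.some.inj hhd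
    exact hb
  · exact absurd hhd.symm (Option.some_ne_none a)

lemma model_reduct_congr {P : AProgram α} {I I' J J' : Set α}
    (hI : ∀ a ∈ progAtoms P, (a ∈ I ↔ a ∈ I'))
    (hJ : ∀ a ∈ progAtoms P, (a ∈ J ↔ a ∈ J'))
    (h : isModel J (reduct P I)) : isModel J' (reduct P I') := by
  rintro r' ⟨r, hrP, hneg, rfl⟩ hbody
  have hatoms : ARule.atoms r ⊆ progAtoms P := atoms_subset' hrP
  have hneg' : ∀ a ∈ r.neg, a ∉ I := fun a ha hai =>
    hneg a ha ((hI a (hatoms (Or.inr ha))).mp hai)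
  have hposJ : r.pos ⊆ J := fun a ha =>
    (hJ a (hatoms (Or.inl (Or.inr ha)))).mpr (hbody.1 ha)
  obtain ⟨hh, hhd, hhJ⟩ := h ⟨r.head, r.pos, ∅⟩ ⟨r, hrP, hneg', rfl⟩ ⟨hposJ, negEmpty J⟩
  have hhA : hh ∈ ARule.atoms r := Or.inl (Or.inl hhd)
  exact ⟨hh, hhd, (hJ hh (hatoms hhA)).mp hhJ⟩

lemma heads_sat_subset' (s n : α) (P : AProgram α) :
    heads (satProg s n P) ⊆ insert s (insert n (heads P)) := by
  rintro a ⟨r, hr, hhd⟩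
  rcases hr with ⟨r0, hr0, rfl⟩ | hr
  · exact Or.inr (Or.inr ⟨r0, hr0, hhd⟩)
  · rcases hr with rfl | rfl
    · exact Or.inl (Option.some.inj hhd).symm
    · exact Or.inr (Or.inl (Option.some.inj hhd).symm)

lemma heads_clone_subset' (cl : α → α) (P : AProgram α) :
    heads (cloneProg cl P) ⊆ cl '' heads P := by
  rintro a ⟨r', ⟨r, hr, rfl⟩, hhd⟩
  obtain ⟨b, hb, heq⟩ := Option.map_eq_some_iff.mp hhd
  have hbH : b ∈ heads P := ⟨r, hr, hb⟩
  refine ⟨b, hbH, ?_⟩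
  rw [← heq, if_pos hbH]

lemma progAtoms_rename_subset' (ρ : α → α) (P : AProgram α) :
    progAtoms (renameProg ρ P) ⊆ ρ '' progAtoms P := by
  intro a ha
  simp only [progAtoms, Set.mem_iUnion, exists_prop] at ha
  obtain ⟨r', ⟨r, hr, rfl⟩, har⟩ := ha
  rcases har with (hh | hp) | hn
  · obtain ⟨b, hb, heq⟩ := Option.map_eq_some_iff.mp hh
    exact ⟨b, atoms_subset' hr (Or.inl (Or.inl hb)), heq⟩
  · obtain ⟨b, hb, heq⟩ := hp
    exact ⟨b, atoms_subset' hr (Or.inl (Or.inr hb)), heq⟩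
  · obtain ⟨b, hb, heq⟩ := hn
    exact ⟨b, atoms_subset' hr (Or.inr hb), heq⟩

lemma progAtoms_sat_subset' (s n : α) (P : AProgram α) :
    progAtoms (satProg s n P) ⊆ insert s (insert n (progAtoms P)) := by
  intro a ha
  simp only [progAtoms, Set.mem_iUnion, exists_prop] at ha
  obtain ⟨r, hr, har⟩ := ha
  rcases hr with ⟨r0, hr0, rfl⟩ | hr
  · rcases har with (hh | hp) | hn
    · exact Or.inr (Or.inr (atoms_subset' hr0 (Or.inl (Or.inl hh))))
    · exact Or.inr (Or.inr (atoms_subset' hr0 (Or.inl (Or.inr hp))))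
    · rcases hn with rfl | hn
      · exact Or.inl rfl
      · exact Or.inr (Or.inr (atoms_subset' hr0 (Or.inr hn)))
  · rcases hr with rfl | rfl
    · rcases har with (hh | hp) | hn
      · exact Or.inl (Option.some.inj hh).symm
      · exact absurd hp (Set.notMem_empty a)
      · exact Or.inr (Or.inl hn)
    · rcases har with (hh | hp) | hn
      · exact Or.inr (Or.inl (Option.some.inj hh).symm)
      · exact absurd hp (Set.notMem_empty a)
      · exact Or.inl hn

lemma progAtoms_union' (P Q : AProgram α) :
    progAtoms (P ∪ Q) = progAtoms P ∪ progAtoms Q := by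
  ext a
  simp only [progAtoms, Set.mem_iUnion, Set.mem_union, exists_prop]
  constructor
  · rintro ⟨r, hr | hr, ha⟩
    · exact Or.inl ⟨r, hr, ha⟩
    · exact Or.inr ⟨r, hr, ha⟩
  · rintro (⟨r, hr, ha⟩ | ⟨r, hr, ha⟩)
    · exact ⟨r, Or.inl hr, ha⟩
    · exact ⟨r, Or.inr hr, ha⟩

end Helpers

open ASP in
/-- with `M = M1 ∪ M2` an answer set of `P = P1 ∪ sat(clone(P2))`
where `M1` is an answer set of `P1`, the answer sets of `P2 ∪ fix_P(M)` are
exactly the sets `M2 ∪ M2'` with `M2'` an answer set of `P2 ∪ fix_{P1}(M1)`. -/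
theorem clone_fix_answer_sets {α : Type} (P1 P2 : AProgram α)
    (hfin1 : P1.Finite) (hfin2 : P2.Finite) (cl : α → α) (s n : α)
    (hheads : ∀ a ∈ heads P2, a ∉ progAtoms P1)
    (hinj : Set.InjOn cl (heads P2))
    (hfresh : ∀ a ∈ heads P2,
      cl a ∉ progAtoms P1 ∪ progAtoms P2 ∧ cl a ≠ s ∧ cl a ≠ n)
    (hs : s ∉ progAtoms P1 ∪ progAtoms P2) (hn : n ∉ progAtoms P1 ∪ progAtoms P2)
    (hsn : s ≠ n) (M1 M2 : Set α) (hM1 : isAnswerSet P1 M1)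
    (hM : isAnswerSet (P1 ∪ satProg s n (cloneProg cl P2)) (M1 ∪ M2)) (M' : Set α) :
    isAnswerSet
        (P2 ∪ fixProg (progAtoms (P1 ∪ satProg s n (cloneProg cl P2))) (M1 ∪ M2)) M' ↔
      ∃ M2', M' = M2 ∪ M2' ∧ isAnswerSet (P2 ∪ fixProg (progAtoms P1) M1) M2' := by
  clear hfin1 hfin2 hinj hsn
  set S : AProgram α := satProg s n (cloneProg cl P2) with hS
  set B : Set α := progAtoms (P1 ∪ S) with hBdef
  set M : Set α := M1 ∪ M2 with hMdef
  have hM1M : M1 ⊆ M := hMdef ▸ Set.subset_union_left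
  have hM1h : M1 ⊆ heads P1 := as_subset_heads hM1
  have hMchar : ∀ a ∈ M, a ∈ heads P1 ∨ a = s ∨ a = n ∨ ∃ b ∈ heads P2, cl b = a := by
    intro a ha
    obtain ⟨r, hr, hhd⟩ := as_subset_heads hM ha
    rcases hr with hr | hr
    · exact Or.inl ⟨r, hr, hhd⟩
    · have haS : a ∈ heads S := ⟨r, hr, hhd⟩
      rw [hS] at haS
      rcases heads_sat_subset' s n _ haS with rfl | rfl | hc
      · exact Or.inr (Or.inl rfl)
      · exact Or.inr (Or.inr (Or.inl rfl))
      · obtain ⟨b, hb, heq⟩ := heads_clone_subset' cl P2 hc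
        exact Or.inr (Or.inr (Or.inr ⟨b, hb, heq⟩))
  have hF1 : ∀ a ∈ M, a ∈ heads P1 → a ∈ M1 := by
    intro a haM hah
    by_contra haM1
    have hJM : M1 ∪ (M \ heads P1) ⊆ M := Set.union_subset hM1M Set.diff_subset
    refine hM.2 (M1 ∪ (M \ heads P1))
      (Set.ssubset_iff_subset_ne.mpr ⟨hJM, fun heq => ?_⟩) ?_
    · have hx : a ∈ M1 ∪ (M \ heads P1) := by rw [heq]; exact haM
      rcases hx with h | h
      · exact haM1 h
      · exact h.2 hah
    · rintro r' ⟨r, hr, hneg, rfl⟩ hbody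
      rcases hr with hr1 | hrS
      · have hposA : r.pos ⊆ progAtoms P1 := fun b hb =>
          atoms_subset' hr1 (Or.inl (Or.inr hb))
        have hpos : r.pos ⊆ M1 := by
          intro b hb
          rcases hbody.1 hb with hbM1 | hbD
          · exact hbM1
          · rcases hMchar b hbD.1 with h | rfl | rfl | ⟨c, hc, heq⟩
            · exact absurd h hbD.2
            · exact absurd (Or.inl (hposA hb)) hs
            · exact absurd (Or.inl (hposA hb)) hn
            · exact absurd (Or.inl (by rw [heq]; exact hposA hb)) (hfresh c hc).1
        obtain ⟨hh, hhd, hhM1⟩ := hM1.1 _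
          ⟨r, hr1, fun b hb hbM1 => hneg b hb (hM1M hbM1), rfl⟩ ⟨hpos, negEmpty M1⟩
        exact ⟨hh, hhd, Or.inl hhM1⟩
      · obtain ⟨hh, hhd, hhM⟩ := hM.1 _ ⟨r, Or.inr hrS, hneg, rfl⟩
          ⟨hbody.1.trans hJM, negEmpty M⟩
        refine ⟨hh, hhd, Or.inr ⟨hhM, fun hhP1 => ?_⟩⟩
        have hhS : hh ∈ heads S := ⟨r, hrS, hhd⟩
        rw [hS] at hhS
        have hhB1 : hh ∈ progAtoms P1 := heads_subset_progAtoms' hhP1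
        rcases heads_sat_subset' s n _ hhS with rfl | rfl | hc
        · exact hs (Or.inl hhB1)
        · exact hn (Or.inl hhB1)
        · obtain ⟨c, hc, heq⟩ := heads_clone_subset' cl P2 hc
          exact (hfresh c hc).1 (Or.inl (by rw [heq]; exact hhB1))
  have hH2A2 : heads P2 ⊆ progAtoms P2 := heads_subset_progAtoms'
  have hA2iff : ∀ a ∈ progAtoms P2, (a ∈ M ↔ a ∈ M1) := by
    intro a ha
    refine ⟨fun haM => ?_, fun h => hM1M h⟩
    rcases hMchar a haM with h | rfl | rfl | ⟨b, hb, heq⟩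
    · exact hF1 a haM h
    · exact absurd (Or.inr ha) hs
    · exact absurd (Or.inr ha) hn
    · exact absurd (Or.inr (by rw [heq]; exact ha)) (hfresh b hb).1
  have hH2notM : ∀ a ∈ heads P2, a ∉ M := fun a ha haM =>
    hheads a ha (heads_subset_progAtoms' (hM1h ((hA2iff a (hH2A2 ha)).mp haM)))
  have hH2notB : ∀ a ∈ heads P2, a ∉ B := by
    intro a ha hB
    rw [hBdef, progAtoms_union'] at hB
    rcases hB with hB | hB
    · exact hheads a ha hB
    · rw [hS] at hB
      rcases progAtoms_sat_subset' s n _ hB with rfl | rfl | hc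
      · exact hs (Or.inr (hH2A2 ha))
      · exact hn (Or.inr (hH2A2 ha))
      · obtain ⟨b, hb, heq0⟩ := progAtoms_rename_subset' _ P2 hc
        have heq : (if b ∈ heads P2 then cl b else b) = a := heq0
        by_cases hbH : b ∈ heads P2
        · rw [if_pos hbH] at heq
          exact (hfresh b hbH).1 (Or.inr (by rw [heq]; exact hH2A2 ha))
        · rw [if_neg hbH] at heq
          exact hbH (by rw [heq]; exact ha)
  have hcong : ∀ (N0 : Set α), ∀ a ∈ progAtoms P2, (a ∈ M1 ∪ N0 ↔ a ∈ M ∪ N0) := by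
    intro N0 a ha
    constructor
    · rintro (h | h)
      · exact Or.inl (hM1M h)
      · exact Or.inr h
    · rintro (h | h)
      · exact Or.inl ((hA2iff a ha).mp h)
      · exact Or.inr h
  constructor
  · -- forward direction
    intro hAS
    have hmod := hAS.1
    rw [reduct_union', reduct_fix', isModel_union'] at hmod
    obtain ⟨hmodP2, hmodFix⟩ := hmod
    rw [model_fix_iff'] at hmodFix
    obtain ⟨hMM', -⟩ := hmodFix
    have hM'h : ∀ a ∈ M', a ∈ heads P2 ∨ a ∈ M := by
      intro a ha
      obtain ⟨r, hr, hhd⟩ := as_subset_heads hAS ha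
      rcases hr with hr | hr
      · exact Or.inl ⟨r, hr, hhd⟩
      · exact Or.inr (heads_fix_subset' ⟨r, hr, hhd⟩)
    have hNH2 : M' \ M ⊆ heads P2 := fun a ha => (hM'h a ha.1).resolve_right ha.2
    have hM'eq : M ∪ (M' \ M) = M' := Set.union_diff_cancel hMM'
    have hiff : ∀ a ∈ progAtoms P2, (a ∈ M' ↔ a ∈ M1 ∪ (M' \ M)) := by
      intro a ha
      constructor
      · intro h
        exact (hcong (M' \ M) a ha).mpr (by rw [hM'eq]; exact h)
      · intro h
        have h2 := (hcong (M' \ M) a ha).mp h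
        rw [hM'eq] at h2
        exact h2
    refine ⟨M1 ∪ (M' \ M), ?_, ?_, ?_⟩
    · have h1 : M2 ∪ (M1 ∪ (M' \ M)) = M ∪ (M' \ M) := by
        rw [hMdef]
        ext a
        simp only [Set.mem_union]
        tauto
      rw [h1, hM'eq]
    · -- isModel part
      rw [reduct_union', reduct_fix', isModel_union']
      constructor
      · exact model_reduct_congr hiff hiff hmodP2
      · rw [model_fix_iff']
        refine ⟨Set.subset_union_left, fun a haB1 haM1 hmem => ?_⟩
        rcases hmem with h | h
        · exact haM1 h
        · exact hheads a (hNH2 h) haB1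
    · -- minimality part
      intro J hJss hJmod
      rw [reduct_union', reduct_fix', isModel_union'] at hJmod
      obtain ⟨hJ2, hJfix⟩ := hJmod
      rw [model_fix_iff'] at hJfix
      have hM1J : M1 ⊆ J := hJfix.1
      have hJsub : J ⊆ M1 ∪ (M' \ M) := hJss.subset
      have hN0N : J \ M1 ⊆ M' \ M := fun a ha => (hJsub ha.1).resolve_left ha.2
      have hJeq : M1 ∪ (J \ M1) = J := Set.union_diff_cancel hM1J
      obtain ⟨x, hxMN, hxJ⟩ := Set.exists_of_ssubset hJss
      have hxN : x ∈ M' \ M := hxMN.resolve_left (fun h => hxJ (hM1J h))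
      refine hAS.2 (M ∪ (J \ M1)) ?_ ?_
      · refine Set.ssubset_iff_subset_ne.mpr ⟨?_, fun heq => ?_⟩
        · intro a ha
          rcases ha with h | h
          · rw [← hM'eq]; exact Or.inl h
          · rw [← hM'eq]; exact Or.inr (hN0N h)
        · have hx' : x ∈ M ∪ (J \ M1) := by
            rw [heq, ← hM'eq]; exact Or.inr hxN
          rcases hx' with h | h
          · exact hxN.2 h
          · exact hxJ h.1
      · rw [reduct_union', reduct_fix', isModel_union']
        constructor
        · have hJ2' : isModel (M1 ∪ (J \ M1)) (reduct P2 (M1 ∪ (M' \ M))) := by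
            rw [hJeq]; exact hJ2
          exact model_reduct_congr (fun a ha => (hiff a ha).symm) (hcong (J \ M1)) hJ2'
        · rw [model_fix_iff']
          refine ⟨Set.subset_union_left, fun a haB haM hmem => ?_⟩
          rcases hmem with h | h
          · exact haM h
          · exact hH2notB a (hNH2 (hN0N h)) haB
  · -- backward direction
    rintro ⟨M2', rfl, hAS2⟩
    have hmod := hAS2.1
    rw [reduct_union', reduct_fix', isModel_union'] at hmod
    obtain ⟨hmodP2, hmodFix⟩ := hmod
    rw [model_fix_iff'] at hmodFix
    have hM1M2' : M1 ⊆ M2' := hmodFix.1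
    have hM2'h : ∀ a ∈ M2', a ∈ heads P2 ∨ a ∈ M1 := by
      intro a ha
      obtain ⟨r, hr, hhd⟩ := as_subset_heads hAS2 ha
      rcases hr with hr | hr
      · exact Or.inl ⟨r, hr, hhd⟩
      · exact Or.inr (heads_fix_subset' ⟨r, hr, hhd⟩)
    have hNH2 : M2' \ M1 ⊆ heads P2 := fun a ha => (hM2'h a ha.1).resolve_right ha.2
    have hM2'eq : M1 ∪ (M2' \ M1) = M2' := Set.union_diff_cancel hM1M2'
    have hiff : ∀ a ∈ progAtoms P2, (a ∈ M ∪ (M2' \ M1) ↔ a ∈ M2') := by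
      intro a ha
      constructor
      · intro h
        have h2 := (hcong (M2' \ M1) a ha).mpr h
        rw [hM2'eq] at h2
        exact h2
      · intro h
        exact (hcong (M2' \ M1) a ha).mp (by rw [hM2'eq]; exact h)
    have hgoal_eq : M2 ∪ M2' = M ∪ (M2' \ M1) := by
      rw [hMdef]
      ext a
      constructor
      · rintro (h | h)
        · exact Or.inl (Or.inr h)
        · by_cases h1 : a ∈ M1
          · exact Or.inl (Or.inl h1)
          · exact Or.inr ⟨h, h1⟩
      · rintro ((h | h) | h)
        · exact Or.inr (hM1M2' h)
        · exact Or.inl h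
        · exact Or.inr h.1
    rw [hgoal_eq]
    constructor
    · rw [reduct_union', reduct_fix', isModel_union']
      constructor
      · exact model_reduct_congr (fun a ha => (hiff a ha).symm)
          (fun a ha => (hiff a ha).symm) hmodP2
      · rw [model_fix_iff']
        refine ⟨Set.subset_union_left, fun a haB haM hmem => ?_⟩
        rcases hmem with h | h
        · exact haM h
        · exact hH2notB a (hNH2 h) haB
    · intro J hJss hJmod
      rw [reduct_union', reduct_fix', isModel_union'] at hJmod
      obtain ⟨hJ2, hJfix⟩ := hJmod
      rw [model_fix_iff'] at hJfix
      have hMJ : M ⊆ J := hJfix.1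
      have hJsub : J ⊆ M ∪ (M2' \ M1) := hJss.subset
      have hN0N : J \ M ⊆ M2' \ M1 := fun a ha => (hJsub ha.1).resolve_left ha.2
      have hJeq : M ∪ (J \ M) = J := Set.union_diff_cancel hMJ
      obtain ⟨x, hxMN, hxJ⟩ := Set.exists_of_ssubset hJss
      have hxN : x ∈ M2' \ M1 := hxMN.resolve_left (fun h => hxJ (hMJ h))
      refine hAS2.2 (M1 ∪ (J \ M)) ?_ ?_
      · refine Set.ssubset_iff_subset_ne.mpr ⟨?_, fun heq => ?_⟩
        · intro a ha
          rcases ha with h | h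
          · exact hM1M2' h
          · exact (hN0N h).1
        · have hx' : x ∈ M1 ∪ (J \ M) := by rw [heq]; exact hxN.1
          rcases hx' with h | h
          · exact hxN.2 h
          · exact hxJ h.1
      · rw [reduct_union', reduct_fix', isModel_union']
        constructor
        · have hJ2' : isModel (M ∪ (J \ M)) (reduct P2 (M ∪ (M2' \ M1))) := by
            rw [hJeq]; exact hJ2
          exact model_reduct_congr hiff (fun a ha => (hcong (J \ M) a ha).symm) hJ2'
        · rw [model_fix_iff']
          refine ⟨Set.subset_union_left, fun a haB1 haM1 hmem => ?_⟩
          rcases hmem with h | h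
          · exact haM1 h
          · exact hheads a (hNH2 (hN0N h)) haB1
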